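/- SubGaussianity of the clipped logit of a binomial proportion (Lemma F.2): Fix β ∈ (1/2, 1). There exists a constant C > 0 depending only on β (the paper gives C = (6√(2e)·(3√(log 2)+1))²·3/(2(1−β)^4)) such that for every n ∈ ℕ with n ≥ 1, every p ∈ [1−β, β], Y_n ~ Binomial(n, p) and X_n = Y_n/n, the random variable f(X_n) is subGaussian with variance proxy at most C/n; that is, E[exp(t·(f(X_n) − E[f(X_n)]))] ≤ exp((C/n)·t²/2) for all t ∈ ℝ. -/

import Mathlib

open MeasureTheory ProbabilityTheory

/-- The clipped logit function `f` of Lemma F.1: `f(x) = log(x/(1−x))` on `(1−β, β)`,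
clamped to its boundary values outside. -/
noncomputable def flog (β x : ℝ) : ℝ :=
  if x ≤ 1 - β then Real.log ((1 - β) / β)
  else if β ≤ x then Real.log (β / (1 - β))
  else Real.log (x / (1 - x))

/-- `Y` has the binomial law with `m` trials and success probability `p` under `P`. -/
def HasBinomialLaw {Ω : Type*} [MeasurableSpace Ω] (P : Measure Ω)
    (Y : Ω → ℕ) (m : ℕ) (p : ℝ) : Prop :=
  ∀ t : ℕ, P {ω | Y ω = t} =
    ENNReal.ofReal ((m.choose t : ℝ) * p ^ t * (1 - p) ^ (m - t))


lemma exp_le_add_exp_sq (x : ℝ) : Real.exp x ≤ x + Real.exp (x ^ 2) := by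
  rcases le_or_gt 1 (|x|) with h | h
  · rcases abs_cases x with ⟨he, _⟩ | ⟨he, _⟩
    · -- x ≥ 0, x ≥ 1
      have hx1 : 1 ≤ x := by rw [he] at h; exact h
      have : Real.exp x ≤ Real.exp (x ^ 2) := Real.exp_le_exp.mpr (by nlinarith)
      linarith
    · -- x ≤ -1
      have hx1 : x ≤ -1 := by nlinarith [he ▸ h]
      have h1 : Real.exp x ≤ 1 := Real.exp_le_one_iff.mpr (by linarith)
      have h3 : x ^ 2 + 1 ≤ Real.exp (x ^ 2) := Real.add_one_le_exp _
      nlinarith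
  · have hb := Real.exp_bound (x := x) h.le (n := 2) (by norm_num)
    have hs : ∑ i ∈ Finset.range 2, x ^ i / (Nat.factorial i : ℝ) = 1 + x := by
      simp [Finset.sum_range_succ, Nat.factorial]
    rw [hs] at hb
    have h2 : Real.exp x ≤ 1 + x + |x| ^ 2 * ((2 : ℕ).succ / ((Nat.factorial 2 : ℝ) * 2)) := by
      have := abs_le.mp hb
      linarith [this.2]
    have h3 : (1 : ℝ) + x ^ 2 ≤ Real.exp (x ^ 2) := by linarith [Real.add_one_le_exp (x ^ 2)]
    have h4 : |x| ^ 2 = x ^ 2 := sq_abs x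
    have : ((2 : ℕ).succ / ((Nat.factorial 2 : ℝ) * 2)) = 3 / 4 := by norm_num [Nat.factorial]
    rw [this, h4] at h2
    nlinarith


noncomputable def binomWeight (p : ℝ) (n k : ℕ) : ℝ :=
  (n.choose k : ℝ) * p ^ k * (1 - p) ^ (n - k)

lemma binomWeight_nonneg {p : ℝ} (hp0 : 0 ≤ p) (hp1 : p ≤ 1) (n k : ℕ) :
    0 ≤ binomWeight p n k := by
  have : (0:ℝ) ≤ 1 - p := by linarith
  unfold binomWeight; positivity

lemma binomWeight_succ_succ {p : ℝ} (n k : ℕ) (hk : k ≤ n) :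
    binomWeight p (n + 1) (k + 1)
      = (1 - p) * binomWeight p n (k + 1) + p * binomWeight p n k := by
  rcases eq_or_lt_of_le hk with rfl | hk'
  · simp [binomWeight, Nat.choose_succ_self]
    ring
  · have hk1 : k + 1 ≤ n := hk'
    unfold binomWeight
    rw [Nat.choose_succ_succ]
    have h1 : n + 1 - (k + 1) = n - k := by omega
    have h2 : n - k = (n - (k + 1)) + 1 := by omega
    rw [h1, h2]
    push_cast
    ring

lemma binom_rec (p : ℝ) (n : ℕ) (h : ℕ → ℝ) :
    ∑ k ∈ Finset.range (n + 2), binomWeight p (n + 1) k * h k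
      = ∑ k ∈ Finset.range (n + 1), binomWeight p n k * ((1 - p) * h k + p * h (k + 1)) := by
  rw [Finset.sum_range_succ' (fun k => binomWeight p (n + 1) k * h k) (n + 1)]
  have h0 : binomWeight p (n + 1) 0 = (1 - p) * binomWeight p n 0 := by
    simp [binomWeight]; ring
  calc (∑ k ∈ Finset.range (n + 1), binomWeight p (n + 1) (k + 1) * h (k + 1))
        + binomWeight p (n + 1) 0 * h 0
      = (∑ k ∈ Finset.range (n + 1),
          ((1 - p) * (binomWeight p n (k + 1) * h (k + 1)) + binomWeight p n k * (p * h (k + 1))))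
        + (1 - p) * (binomWeight p n 0 * h 0) := by
        rw [h0]
        congr 1
        · apply Finset.sum_congr rfl
          intro k hk
          rw [binomWeight_succ_succ n k (by simpa using Nat.lt_succ_iff.mp (Finset.mem_range.mp hk))]
          ring
        · ring
    _ = (1 - p) * ((∑ k ∈ Finset.range (n + 1), binomWeight p n (k + 1) * h (k + 1))
          + binomWeight p n 0 * h 0)
        + ∑ k ∈ Finset.range (n + 1), binomWeight p n k * (p * h (k + 1)) := by
        rw [Finset.sum_add_distrib, ← Finset.mul_sum]; ring
    _ = (1 - p) * (∑ k ∈ Finset.range (n + 2), binomWeight p n k * h k)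
        + ∑ k ∈ Finset.range (n + 1), binomWeight p n k * (p * h (k + 1)) := by
        rw [Finset.sum_range_succ' (fun k => binomWeight p n k * h k) (n + 1)]
    _ = (1 - p) * (∑ k ∈ Finset.range (n + 1), binomWeight p n k * h k)
        + ∑ k ∈ Finset.range (n + 1), binomWeight p n k * (p * h (k + 1)) := by
        rw [Finset.sum_range_succ (fun k => binomWeight p n k * h k) (n + 1)]
        have : binomWeight p n (n + 1) = 0 := by
          simp [binomWeight, Nat.choose_succ_self]
        rw [this]; ring
    _ = _ := by
        rw [Finset.mul_sum, ← Finset.sum_add_distrib]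
        apply Finset.sum_congr rfl
        intro k _
        ring

lemma binomWeight_sum (p : ℝ) (n : ℕ) :
    ∑ k ∈ Finset.range (n + 1), binomWeight p n k = 1 := by
  induction n with
  | zero => simp [binomWeight]
  | succ n ih =>
    have h := binom_rec p n (fun _ => 1)
    simp only [mul_one] at h
    rw [h]
    have h1 : (1 : ℝ) - p + p = 1 := by ring
    rw [h1]
    simpa using ih

lemma mgf_bound {p : ℝ} (hp0 : 0 ≤ p) (hp1 : p ≤ 1) {c : ℝ} (hc : 0 ≤ c) (t : ℝ) :
    ∀ (n : ℕ) (F : ℕ → ℝ), (∀ k, |F (k + 1) - F k| ≤ c) →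
    ∑ k ∈ Finset.range (n + 1), binomWeight p n k *
        Real.exp (t * (F k - ∑ j ∈ Finset.range (n + 1), binomWeight p n j * F j))
      ≤ Real.exp (n * (t ^ 2 * c ^ 2)) := by
  intro n
  induction n with
  | zero =>
    intro F _
    simp [binomWeight]
  | succ n ih =>
    intro F hF
    set G : ℕ → ℝ := fun k => (1 - p) * F k + p * F (k + 1) with hGdef
    have hG : ∀ k, |G (k + 1) - G k| ≤ c := by
      intro k
      have e : G (k + 1) - G k = (1 - p) * (F (k + 1) - F k) + p * (F (k + 2) - F (k + 1)) := by
        simp only [hGdef]; ring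
      rw [e]
      calc |(1 - p) * (F (k + 1) - F k) + p * (F (k + 2) - F (k + 1))|
          ≤ |(1 - p) * (F (k + 1) - F k)| + |p * (F (k + 2) - F (k + 1))| := abs_add_le _ _
        _ ≤ (1 - p) * c + p * c := by
            rw [abs_mul, abs_mul, abs_of_nonneg (by linarith : (0:ℝ) ≤ 1 - p), abs_of_nonneg hp0]
            exact add_le_add (mul_le_mul_of_nonneg_left (hF k) (by linarith))
              (mul_le_mul_of_nonneg_left (hF (k + 1)) hp0)
        _ = c := by ring
    set μ : ℝ := ∑ j ∈ Finset.range (n + 2), binomWeight p (n + 1) j * F j with hμdef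
    have hμG : μ = ∑ j ∈ Finset.range (n + 1), binomWeight p n j * G j := binom_rec p n F
    have hrec := binom_rec p n (fun k => Real.exp (t * (F k - μ)))
    rw [hrec]
    have key : ∀ k, (1 - p) * Real.exp (t * (F k - μ)) + p * Real.exp (t * (F (k + 1) - μ))
        ≤ Real.exp (t ^ 2 * c ^ 2) * Real.exp (t * (G k - μ)) := by
      intro k
      set x : ℝ := t * (F k - G k) with hx
      set y : ℝ := t * (F (k + 1) - G k) with hy
      have hex : t * (F k - μ) = x + t * (G k - μ) := by rw [hx]; ring
      have hey : t * (F (k + 1) - μ) = y + t * (G k - μ) := by rw [hy]; ring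
      rw [hex, hey, Real.exp_add, Real.exp_add]
      have harr : (1 - p) * (Real.exp x * Real.exp (t * (G k - μ)))
          + p * (Real.exp y * Real.exp (t * (G k - μ)))
          = ((1 - p) * Real.exp x + p * Real.exp y) * Real.exp (t * (G k - μ)) := by ring
      rw [harr]
      gcongr ?_ * _
      have hzero : (1 - p) * x + p * y = 0 := by
        rw [hx, hy]; simp only [hGdef]; ring
      have hd2 : (F (k + 1) - F k) ^ 2 ≤ c ^ 2 := by
        rw [← sq_abs]
        exact pow_le_pow_left₀ (abs_nonneg _) (hF k) 2
      have hx2 : x ^ 2 ≤ t ^ 2 * c ^ 2 := by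
        have hFG : F k - G k = p * (F k - F (k + 1)) := by simp only [hGdef]; ring
        have hp2 : p ^ 2 ≤ 1 := by nlinarith
        calc x ^ 2 = p ^ 2 * (t * (F (k + 1) - F k)) ^ 2 := by rw [hx, hFG]; ring
          _ ≤ 1 * (t * (F (k + 1) - F k)) ^ 2 := mul_le_mul_of_nonneg_right hp2 (sq_nonneg _)
          _ = t ^ 2 * (F (k + 1) - F k) ^ 2 := by ring
          _ ≤ t ^ 2 * c ^ 2 := mul_le_mul_of_nonneg_left hd2 (sq_nonneg t)
      have hy2 : y ^ 2 ≤ t ^ 2 * c ^ 2 := by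
        have hFG : F (k + 1) - G k = (1 - p) * (F (k + 1) - F k) := by simp only [hGdef]; ring
        have hp2 : (1 - p) ^ 2 ≤ 1 := by nlinarith
        calc y ^ 2 = (1 - p) ^ 2 * (t * (F (k + 1) - F k)) ^ 2 := by rw [hy, hFG]; ring
          _ ≤ 1 * (t * (F (k + 1) - F k)) ^ 2 := mul_le_mul_of_nonneg_right hp2 (sq_nonneg _)
          _ = t ^ 2 * (F (k + 1) - F k) ^ 2 := by ring
          _ ≤ t ^ 2 * c ^ 2 := mul_le_mul_of_nonneg_left hd2 (sq_nonneg t)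
      have hq : (0:ℝ) ≤ 1 - p := by linarith
      have a1 : Real.exp x ≤ x + Real.exp (t ^ 2 * c ^ 2) :=
        le_trans (exp_le_add_exp_sq x) (by linarith [Real.exp_le_exp.mpr hx2])
      have a2 : Real.exp y ≤ y + Real.exp (t ^ 2 * c ^ 2) :=
        le_trans (exp_le_add_exp_sq y) (by linarith [Real.exp_le_exp.mpr hy2])
      calc (1 - p) * Real.exp x + p * Real.exp y
          ≤ (1 - p) * (x + Real.exp (t ^ 2 * c ^ 2)) + p * (y + Real.exp (t ^ 2 * c ^ 2)) :=
            add_le_add (mul_le_mul_of_nonneg_left a1 hq) (mul_le_mul_of_nonneg_left a2 hp0)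
        _ = ((1 - p) * x + p * y) + Real.exp (t ^ 2 * c ^ 2) := by ring
        _ = Real.exp (t ^ 2 * c ^ 2) := by rw [hzero]; ring
    calc ∑ k ∈ Finset.range (n + 1), binomWeight p n k *
            ((1 - p) * Real.exp (t * (F k - μ)) + p * Real.exp (t * (F (k + 1) - μ)))
        ≤ ∑ k ∈ Finset.range (n + 1), binomWeight p n k *
            (Real.exp (t ^ 2 * c ^ 2) * Real.exp (t * (G k - μ))) := by
          apply Finset.sum_le_sum
          intro k _
          exact mul_le_mul_of_nonneg_left (key k) (binomWeight_nonneg hp0 hp1 n k)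
      _ = Real.exp (t ^ 2 * c ^ 2) *
            ∑ k ∈ Finset.range (n + 1), binomWeight p n k * Real.exp (t * (G k - μ)) := by
          rw [Finset.mul_sum]; apply Finset.sum_congr rfl; intro k _; ring
      _ ≤ Real.exp (t ^ 2 * c ^ 2) * Real.exp (n * (t ^ 2 * c ^ 2)) := by
          gcongr
          rw [hμG]
          exact ih G hG
      _ = Real.exp ((n + 1 : ℕ) * (t ^ 2 * c ^ 2)) := by
          rw [← Real.exp_add]; congr 1; push_cast; ring

lemma log_lip {m u v : ℝ} (hm : 0 < m) (hu : m ≤ u) (hv : m ≤ v) :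
    |Real.log u - Real.log v| ≤ |u - v| / m := by
  have key : ∀ a b : ℝ, m ≤ a → m ≤ b → b ≤ a →
      Real.log a - Real.log b ≤ (a - b) / m := by
    intro a b ha hb hba
    have hb0 : 0 < b := lt_of_lt_of_le hm hb
    have ha0 : 0 < a := lt_of_lt_of_le hm ha
    have h1 : Real.log a - Real.log b = Real.log (a / b) := (Real.log_div ha0.ne' hb0.ne').symm
    have h2 : Real.log (a / b) ≤ a / b - 1 :=
      Real.log_le_sub_one_of_pos (div_pos ha0 hb0)
    have h3 : a / b - 1 = (a - b) / b := by field_simp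
    have h4 : (a - b) / b ≤ (a - b) / m := by
      apply div_le_div_of_nonneg_left (by linarith) hm hb
    linarith
  rcases le_total v u with h | h
  · rw [abs_of_nonneg (by linarith : (0:ℝ) ≤ u - v),
      abs_of_nonneg (by
        have := Real.log_le_log (lt_of_lt_of_le hm hv) h
        linarith : (0:ℝ) ≤ Real.log u - Real.log v)]
    exact key u v hu hv h
  · rw [abs_sub_comm, abs_sub_comm u v, abs_of_nonneg (by linarith : (0:ℝ) ≤ v - u),
      abs_of_nonneg (by
        have := Real.log_le_log (lt_of_lt_of_le hm hu) h
        linarith : (0:ℝ) ≤ Real.log v - Real.log u)]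
    exact key v u hv hu h

lemma flog_eq_clamp {β : ℝ} (hb2 : 1 / 2 < β) (hβ1 : β < 1) (x : ℝ) :
    flog β x = Real.log (max (1 - β) (min β x)) - Real.log (1 - max (1 - β) (min β x)) := by
  have hββ : 1 - β < β := by linarith
  have hβ0 : (0:ℝ) < β := by linarith
  have h1β : (0:ℝ) < 1 - β := by linarith
  unfold flog
  by_cases h1 : x ≤ 1 - β
  · have hmin : min β x = x := min_eq_right (by linarith)
    rw [if_pos h1, hmin, max_eq_left h1]
    rw [Real.log_div h1β.ne' hβ0.ne']
    congr 1
    ring_nf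
  · rw [if_neg h1]
    push_neg at h1
    by_cases h2 : β ≤ x
    · have hmin : min β x = β := min_eq_left h2
      rw [if_pos h2, hmin, max_eq_right hββ.le]
      rw [Real.log_div hβ0.ne' h1β.ne']
    · push_neg at h2
      have hmin : min β x = x := min_eq_right h2.le
      rw [if_neg (not_le.mpr h2), hmin, max_eq_right h1.le]
      have hx0 : 0 < x := by linarith
      have hx1 : 0 < 1 - x := by linarith
      rw [Real.log_div hx0.ne' hx1.ne']

lemma flog_lipschitz {β : ℝ} (hb2 : 1 / 2 < β) (hβ1 : β < 1) (a b : ℝ) :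
    |flog β a - flog β b| ≤ (2 / (1 - β)) * |a - b| := by
  have h1β : (0:ℝ) < 1 - β := by linarith
  have hββ : 1 - β ≤ β := by linarith
  set ca := max (1 - β) (min β a) with hca
  set cb := max (1 - β) (min β b) with hcb
  have hclip : |ca - cb| ≤ |a - b| := by
    have h1 : |min β a - min β b| ≤ |a - b| := by
      have := abs_min_sub_min_le_max β a β b
      simpa using this
    have h2 := abs_max_sub_max_le_max (1 - β) (min β a) (1 - β) (min β b)
    simp only [sub_self, abs_zero] at h2
    calc |ca - cb| ≤ max 0 |min β a - min β b| := h2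
      _ = |min β a - min β b| := max_eq_right (abs_nonneg _)
      _ ≤ |a - b| := h1
  have hca_mem : 1 - β ≤ ca ∧ ca ≤ β := by
    constructor
    · exact le_max_left _ _
    · apply max_le hββ (min_le_left _ _)
  have hcb_mem : 1 - β ≤ cb ∧ cb ≤ β := by
    constructor
    · exact le_max_left _ _
    · apply max_le hββ (min_le_left _ _)
  rw [flog_eq_clamp hb2 hβ1 a, flog_eq_clamp hb2 hβ1 b, ← hca, ← hcb]
  have hA : |Real.log ca - Real.log cb| ≤ |ca - cb| / (1 - β) :=
    log_lip h1β hca_mem.1 hcb_mem.1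
  have hB : |Real.log (1 - ca) - Real.log (1 - cb)| ≤ |ca - cb| / (1 - β) := by
    have := log_lip h1β (by linarith [hca_mem.2] : 1 - β ≤ 1 - ca)
      (by linarith [hcb_mem.2] : 1 - β ≤ 1 - cb)
    have he : |1 - ca - (1 - cb)| = |ca - cb| := by
      rw [abs_sub_comm]; congr 1; ring
    rw [he] at this
    exact this
  calc |Real.log ca - Real.log (1 - ca) - (Real.log cb - Real.log (1 - cb))|
      ≤ |Real.log ca - Real.log cb| + |Real.log (1 - ca) - Real.log (1 - cb)| := by
        have : Real.log ca - Real.log (1 - ca) - (Real.log cb - Real.log (1 - cb))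
            = (Real.log ca - Real.log cb) - (Real.log (1 - ca) - Real.log (1 - cb)) := by ring
        rw [this]
        exact abs_sub _ _
    _ ≤ |ca - cb| / (1 - β) + |ca - cb| / (1 - β) := add_le_add hA hB
    _ = (2 / (1 - β)) * |ca - cb| := by ring
    _ ≤ (2 / (1 - β)) * |a - b| := by
        apply mul_le_mul_of_nonneg_left hclip
        positivity

lemma integral_comp_binomial {Ω : Type} [MeasurableSpace Ω] (P : Measure Ω)
    [IsProbabilityMeasure P] (Y : Ω → ℕ) (hY : Measurable Y) (n : ℕ) {p : ℝ}
    (hp0 : 0 ≤ p) (hp1 : p ≤ 1) (hbin : HasBinomialLaw P Y n p) (g : ℕ → ℝ) :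
    ∫ ω, g (Y ω) ∂P = ∑ k ∈ Finset.range (n + 1), binomWeight p n k * g k := by
  have hs : ∀ k : ℕ, MeasurableSet {ω | Y ω = k} := fun k =>
    hY (measurableSet_singleton k)
  have hPk : ∀ k : ℕ, P {ω | Y ω = k} = ENNReal.ofReal (binomWeight p n k) := hbin
  -- the union of {Y = k}, k ≤ n, has full measure
  have hdisj : (Finset.range (n + 1) : Set ℕ).PairwiseDisjoint
      (fun k => {ω | Y ω = k}) := by
    intro i _ j _ hij
    simp only [Function.onFun, Set.disjoint_left]
    intro ω h1 h2
    exact hij ((h1 : Y ω = i) ▸ (h2 : Y ω = j) ▸ rfl)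
  have hunion : P (⋃ k ∈ Finset.range (n + 1), {ω | Y ω = k}) = 1 := by
    rw [measure_biUnion_finset hdisj (fun k _ => hs k)]
    have : ∑ k ∈ Finset.range (n + 1), P {ω | Y ω = k}
        = ∑ k ∈ Finset.range (n + 1), ENNReal.ofReal (binomWeight p n k) :=
      Finset.sum_congr rfl fun k _ => hPk k
    rw [this, ← ENNReal.ofReal_sum_of_nonneg (fun k _ => binomWeight_nonneg hp0 hp1 n k),
      binomWeight_sum, ENNReal.ofReal_one]
  have hnull : P ((⋃ k ∈ Finset.range (n + 1), {ω | Y ω = k})ᶜ) = 0 := by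
    rw [measure_compl (Finset.measurableSet_biUnion _ fun k _ => hs k) (measure_ne_top _ _),
      hunion, measure_univ, tsub_self]
  have hae : (fun ω => g (Y ω)) =ᵐ[P]
      (fun ω => ∑ k ∈ Finset.range (n + 1),
        Set.indicator {ω' | Y ω' = k} (fun _ => g k) ω) := by
    rw [Filter.eventuallyEq_iff_exists_mem]
    refine ⟨⋃ k ∈ Finset.range (n + 1), {ω | Y ω = k}, ?_, ?_⟩
    · rw [MeasureTheory.mem_ae_iff, Set.compl_eq_univ_diff]
      rw [← Set.compl_eq_univ_diff]
      exact hnull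
    · intro ω hω
      simp only [Set.mem_iUnion, Finset.mem_range, Set.mem_setOf_eq] at hω
      obtain ⟨k₀, hk₀, hYk₀⟩ := hω
      have : ∀ k, Set.indicator {ω' | Y ω' = k} (fun _ => g k) ω
          = if Y ω = k then g k else 0 := by
        intro k
        by_cases h : Y ω = k <;> simp [Set.indicator_apply, Set.mem_setOf_eq, h]
      simp only [this]
      rw [Finset.sum_ite_eq (Finset.range (n + 1)) (Y ω) g]
      simp [hYk₀, Finset.mem_range, hk₀]
  rw [integral_congr_ae hae, integral_finset_sum]
  · apply Finset.sum_congr rfl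
    intro k _
    rw [integral_indicator_const (g k) (hs k), measureReal_def, hPk k, smul_eq_mul,
      ENNReal.toReal_ofReal (binomWeight_nonneg hp0 hp1 n k)]
  · intro k _
    exact (integrable_const (g k)).indicator (hs k)

/-- **Lemma F.2 (SubGaussianity of the clipped logit of a binomial proportion).**
Fix `β ∈ (1/2, 1)`. There is a constant `C > 0` depending only on `β` such that for
every `n ≥ 1`, `p ∈ [1−β, β]`, and `Y_n ~ Binomial(n, p)` with `X_n = Y_n/n`, the
random variable `f(X_n)` is subGaussian with variance proxy at most `C/n`. -/
theorem binomial_clipped_logit_subgaussian (β : ℝ) (hβ : β ∈ Set.Ioo (1 / 2 : ℝ) 1) :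
    ∃ C : ℝ, 0 < C ∧
      ∀ (n : ℕ), 1 ≤ n → ∀ p : ℝ, p ∈ Set.Icc (1 - β) β →
      ∀ (Ω : Type) [MeasurableSpace Ω] (P : Measure Ω),
        IsProbabilityMeasure P →
      ∀ Y : Ω → ℕ, Measurable Y → HasBinomialLaw P Y n p →
      ∀ t : ℝ,
        (∫ ω, Real.exp (t * (flog β ((Y ω : ℝ) / n) -
          ∫ ω', flog β ((Y ω' : ℝ) / n) ∂P)) ∂P) ≤
          Real.exp ((C / n) * t ^ 2 / 2) := by
  obtain ⟨hb2, hβ1⟩ := hβ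
  have h1β : (0:ℝ) < 1 - β := by linarith
  refine ⟨8 / (1 - β) ^ 2, by positivity, ?_⟩
  intro n hn p hp Ω _ P hP Y hY hbin t
  have hn0 : (0:ℝ) < (n:ℝ) := by exact_mod_cast hn
  have hp0 : 0 ≤ p := le_trans (by linarith) hp.1
  have hp1 : p ≤ 1 := le_trans hp.2 (by linarith)
  set F : ℕ → ℝ := fun k => flog β ((k : ℝ) / n) with hFdef
  set c : ℝ := 2 / ((1 - β) * n) with hcdef
  have hc : 0 ≤ c := by positivity
  have hF : ∀ k : ℕ, |F (k + 1) - F k| ≤ c := by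
    intro k
    have h := flog_lipschitz hb2 hβ1 (((k:ℕ) + 1 : ℝ) / n) ((k : ℝ) / n)
    have he : |((k:ℕ) + 1 : ℝ) / n - (k : ℝ) / n| = 1 / n := by
      rw [div_sub_div_same]
      have : ((k:ℕ) + 1 : ℝ) - (k : ℝ) = 1 := by ring
      rw [this, abs_of_nonneg (by positivity)]
    rw [he] at h
    have hFe : F (k + 1) = flog β (((k:ℕ) + 1 : ℝ) / n) := by
      simp only [hFdef]
      norm_num
    rw [hFe]
    calc |flog β (((k:ℕ) + 1 : ℝ) / n) - F k| ≤ 2 / (1 - β) * (1 / n) := h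
      _ = c := by rw [hcdef]; field_simp
  have hmean : (∫ ω', flog β ((Y ω' : ℝ) / n) ∂P)
      = ∑ j ∈ Finset.range (n + 1), binomWeight p n j * F j :=
    integral_comp_binomial P Y hY n hp0 hp1 hbin F
  have hint : (∫ ω, Real.exp (t * (flog β ((Y ω : ℝ) / n) -
        ∫ ω', flog β ((Y ω' : ℝ) / n) ∂P)) ∂P)
      = ∑ k ∈ Finset.range (n + 1), binomWeight p n k *
          Real.exp (t * (F k - ∑ j ∈ Finset.range (n + 1), binomWeight p n j * F j)) := by
    rw [hmean]
    exact integral_comp_binomial P Y hY n hp0 hp1 hbin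
      (fun k => Real.exp (t * (F k - ∑ j ∈ Finset.range (n + 1), binomWeight p n j * F j)))
  rw [hint]
  calc ∑ k ∈ Finset.range (n + 1), binomWeight p n k *
          Real.exp (t * (F k - ∑ j ∈ Finset.range (n + 1), binomWeight p n j * F j))
      ≤ Real.exp (n * (t ^ 2 * c ^ 2)) := mgf_bound hp0 hp1 hc t n F hF
    _ = Real.exp ((8 / (1 - β) ^ 2 / n) * t ^ 2 / 2) := by
        congr 1
        rw [hcdef]
        field_simp
        ring
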